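/- Let C be a one-dimensional C*-category (all Hom spaces are one-dimensional complex Hilbert spaces) whose set of objects is nonempty. Then there exists at least one *-functor γ : C → ℂ. -/

import Mathlib

open ComplexConjugate

/-- A C*-category: Hom spaces are complex Banach spaces, composition is bilinear and
submultiplicative, and there is an antilinear involutive contravariant *-operation fixing
objects, satisfying the C*-identity and positivity. -/
class CStarCat (O : Type*) (Hom : O → O → Type*)
    [∀ A B, NormedAddCommGroup (Hom A B)] [∀ A B, NormedSpace ℂ (Hom A B)] where
  complete : ∀ A B, CompleteSpace (Hom A B)
  comp : ∀ {A B C : O}, Hom A B → Hom B C → Hom A C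
  ide : ∀ A : O, Hom A A
  comp_assoc : ∀ {A B C D : O} (x : Hom A B) (y : Hom B C) (z : Hom C D),
      comp (comp x y) z = comp x (comp y z)
  ide_comp : ∀ {A B : O} (x : Hom A B), comp (ide A) x = x
  comp_ide : ∀ {A B : O} (x : Hom A B), comp x (ide B) = x
  comp_add_left : ∀ {A B C : O} (x y : Hom A B) (z : Hom B C),
      comp (x + y) z = comp x z + comp y z
  comp_add_right : ∀ {A B C : O} (x : Hom A B) (y z : Hom B C),
      comp x (y + z) = comp x y + comp x z
  comp_smul_left : ∀ {A B C : O} (c : ℂ) (x : Hom A B) (z : Hom B C),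
      comp (c • x) z = c • comp x z
  comp_smul_right : ∀ {A B C : O} (c : ℂ) (x : Hom A B) (z : Hom B C),
      comp x (c • z) = c • comp x z
  norm_comp_le : ∀ {A B C : O} (x : Hom A B) (y : Hom B C), ‖comp x y‖ ≤ ‖x‖ * ‖y‖
  invol : ∀ {A B : O}, Hom A B → Hom B A
  invol_invol : ∀ {A B : O} (x : Hom A B), invol (invol x) = x
  invol_add : ∀ {A B : O} (x y : Hom A B), invol (x + y) = invol x + invol y
  invol_smul : ∀ {A B : O} (c : ℂ) (x : Hom A B), invol (c • x) = (conj c) • invol x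
  invol_comp : ∀ {A B C : O} (x : Hom A B) (y : Hom B C),
      invol (comp x y) = comp (invol y) (invol x)
  norm_invol_comp : ∀ {A B : O} (x : Hom A B), ‖comp (invol x) x‖ = ‖x‖ ^ 2
  pos : ∀ {A B : O} (x : Hom A B), ∃ y : Hom B B, comp (invol x) x = comp (invol y) y

/-- A ℂ-valued *-functor on a C*-category (ℂ viewed as a one-object C*-category). -/
structure CChar (O : Type*) (Hom : O → O → Type*)
    [∀ A B, NormedAddCommGroup (Hom A B)] [∀ A B, NormedSpace ℂ (Hom A B)]
    [CStarCat O Hom] where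
  ω : ∀ {A B : O}, Hom A B → ℂ
  map_add : ∀ {A B : O} (x y : Hom A B), ω (x + y) = ω x + ω y
  map_smul : ∀ {A B : O} (c : ℂ) (x : Hom A B), ω (c • x) = c * ω x
  map_comp : ∀ {A B C : O} (x : Hom A B) (y : Hom B C),
      ω (CStarCat.comp x y) = ω x * ω y
  map_ide : ∀ A : O, ω (CStarCat.ide A) = 1
  map_invol : ∀ {A B : O} (x : Hom A B), ω (CStarCat.invol x) = conj (ω x)

section Aux
set_option linter.unusedSectionVars false
variable {O : Type*} {Hom : O → O → Type*}
    [∀ A B, NormedAddCommGroup (Hom A B)] [∀ A B, NormedSpace ℂ (Hom A B)]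
    [CStarCat O Hom]

private lemma czl {A B C : O} (z : Hom B C) : CStarCat.comp (0 : Hom A B) z = 0 := by
  have h := CStarCat.comp_smul_left (0 : ℂ) (0 : Hom A B) z
  simpa using h

private lemma czr {A B C : O} (x : Hom A B) : CStarCat.comp x (0 : Hom B C) = 0 := by
  have h := CStarCat.comp_smul_right (0 : ℂ) x (0 : Hom B C)
  simpa using h

private lemma inv0 {A B : O} : CStarCat.invol (0 : Hom A B) = (0 : Hom B A) := by
  have h := CStarCat.invol_smul (0 : ℂ) (0 : Hom A B)
  simpa using h

private lemma exists_smul {A B : O} (h : Module.finrank ℂ (Hom A B) = 1)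
    {e : Hom A B} (he : e ≠ 0) (x : Hom A B) : ∃ c : ℂ, c • e = x :=
  (finrank_eq_one_iff_of_nonzero' e he).mp h x

private lemma smul_cancel {A B : O} {e : Hom A B} (he : e ≠ 0) {c d : ℂ}
    (h : c • e = d • e) : c = d := smul_left_injective ℂ he h

private lemma ide_ne_zero (h1 : ∀ A B : O, Module.finrank ℂ (Hom A B) = 1) (A : O) :
    CStarCat.ide A ≠ (0 : Hom A A) := by
  have : Nontrivial (Hom A A) :=
    Module.nontrivial_of_finrank_pos (R := ℂ) (by rw [h1 A A]; norm_num)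
  obtain ⟨x, hx⟩ := exists_ne (0 : Hom A A)
  intro h
  exact hx (by rw [← CStarCat.ide_comp x, h, czl])

private lemma invol_ide (h1 : ∀ A B : O, Module.finrank ℂ (Hom A B) = 1) (A : O) :
    CStarCat.invol (CStarCat.ide A) = (CStarCat.ide A : Hom A A) := by
  have hne := ide_ne_zero h1 A
  obtain ⟨c, hc⟩ := exists_smul (h1 A A) hne (CStarCat.invol (CStarCat.ide A))
  have hcne : c ≠ 0 := by
    rintro rfl
    rw [zero_smul] at hc
    exact hne (by rw [← CStarCat.invol_invol (CStarCat.ide A : Hom A A), ← hc, inv0])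
  have hsq : (c * c) • (CStarCat.ide A : Hom A A) = c • CStarCat.ide A := by
    calc (c * c) • (CStarCat.ide A : Hom A A)
        = CStarCat.comp (c • CStarCat.ide A) (c • CStarCat.ide A) := by
          rw [CStarCat.comp_smul_left, CStarCat.comp_smul_right, CStarCat.ide_comp, mul_smul]
      _ = CStarCat.comp (CStarCat.invol (CStarCat.ide A)) (CStarCat.invol (CStarCat.ide A)) := by
          rw [hc]
      _ = CStarCat.invol (CStarCat.comp (CStarCat.ide A) (CStarCat.ide A)) :=
          (CStarCat.invol_comp _ _).symm
      _ = c • CStarCat.ide A := by rw [CStarCat.ide_comp, hc]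
  have hcc : c * c = c := smul_cancel hne hsq
  have hc1 : c = 1 := mul_left_cancel₀ hcne (by rw [hcc, mul_one])
  rw [← hc, hc1, one_smul]

end Aux

/-- A one-dimensional C*-category (all Hom spaces one-dimensional) with a
nonempty set of objects admits at least one ℂ-valued *-functor. -/


theorem one_dimensional_cstarCat_has_character
    {O : Type*} {Hom : O → O → Type*}
    [∀ A B, NormedAddCommGroup (Hom A B)] [∀ A B, NormedSpace ℂ (Hom A B)]
    [CStarCat O Hom] [Nonempty O]
    (h1 : ∀ A B : O, Module.finrank ℂ (Hom A B) = 1) :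
    Nonempty (CChar O Hom) := by
  classical
  obtain ⟨A₀⟩ := ‹Nonempty O›
  have hne : ∀ A : O, CStarCat.ide A ≠ (0 : Hom A A) := ide_ne_zero h1
  choose φ φ_spec using fun (A : O) (x : Hom A A) => exists_smul (h1 A A) (hne A) x
  have φ_unique : ∀ (A : O) (x : Hom A A) (c : ℂ), c • CStarCat.ide A = x → φ A x = c :=
    fun A x c hcx => smul_cancel (hne A) (by rw [φ_spec, hcx])
  have φ_ide : ∀ A : O, φ A (CStarCat.ide A) = 1 := fun A => φ_unique A _ 1 (one_smul _ _)
  have φ_smul : ∀ (A : O) (c : ℂ) (x : Hom A A), φ A (c • x) = c * φ A x := by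
    intro A c x
    exact φ_unique A _ _ (by rw [mul_smul, φ_spec])
  have φ_add : ∀ (A : O) (x y : Hom A A), φ A (x + y) = φ A x + φ A y := by
    intro A x y
    exact φ_unique A _ _ (by rw [add_smul, φ_spec, φ_spec])
  have φ_invol : ∀ (A : O) (x : Hom A A), φ A (CStarCat.invol x) = conj (φ A x) := by
    intro A x
    refine φ_unique A _ _ ?_
    conv_rhs => rw [← φ_spec A x]
    rw [CStarCat.invol_smul, invol_ide h1]
  have φ_comp : ∀ (A : O) (x y : Hom A A),
      φ A (CStarCat.comp x y) = φ A x * φ A y := by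
    intro A x y
    refine φ_unique A _ _ ?_
    conv_rhs => rw [← φ_spec A x, ← φ_spec A y]
    rw [CStarCat.comp_smul_left, CStarCat.comp_smul_right, CStarCat.ide_comp, mul_smul]
  have φ_one : ∀ (A : O) (x : Hom A A), φ A x = 1 → x = CStarCat.ide A := by
    intro A x hx
    rw [← φ_spec A x, hx, one_smul]
  -- choose a nonzero vector in each Hom A₀ B
  have hnontriv : ∀ B : O, ∃ e : Hom A₀ B, e ≠ 0 := by
    intro B
    have : Nontrivial (Hom A₀ B) :=
      Module.nontrivial_of_finrank_pos (R := ℂ) (by rw [h1 A₀ B]; norm_num)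
    exact exists_ne 0
  choose e he using hnontriv
  -- normalize to get "unitaries" u B : Hom A₀ B
  have key : ∀ B : O, ∃ u : Hom A₀ B,
      CStarCat.comp (CStarCat.invol u) u = CStarCat.ide B := by
    intro B
    obtain ⟨y, hy⟩ := CStarCat.pos (e B)
    have hcre : φ B (CStarCat.comp (CStarCat.invol (e B)) (e B)) = (‖φ B y‖ : ℂ) ^ 2 := by
      rw [hy]
      have h2 : CStarCat.comp (CStarCat.invol y) y
          = (conj (φ B y) * φ B y) • CStarCat.ide B := by
        conv_lhs => rw [← φ_spec B y]
        rw [CStarCat.invol_smul, invol_ide h1, CStarCat.comp_smul_left,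
          CStarCat.comp_smul_right, CStarCat.ide_comp, smul_smul]
      rw [φ_unique B _ _ h2.symm, RCLike.conj_mul]
      norm_cast
    have hcne : φ B (CStarCat.comp (CStarCat.invol (e B)) (e B)) ≠ 0 := by
      intro h0
      have h3 : CStarCat.comp (CStarCat.invol (e B)) (e B) = 0 := by
        rw [← φ_spec B (CStarCat.comp (CStarCat.invol (e B)) (e B)), h0, zero_smul]
      have hnorm := CStarCat.norm_invol_comp (e B)
      rw [h3] at hnorm
      simp only [norm_zero] at hnorm
      exact he B (norm_eq_zero.mp (sq_eq_zero_iff.mp hnorm.symm))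
    have hs : ‖φ B y‖ ≠ 0 := by
      intro h0
      apply hcne
      rw [hcre, h0]
      norm_num
    have hsC : ((‖φ B y‖ : ℝ) : ℂ) ≠ 0 := by exact_mod_cast hs
    refine ⟨((‖φ B y‖ : ℂ))⁻¹ • e B, φ_one B _ ?_⟩
    rw [CStarCat.invol_smul, CStarCat.comp_smul_left, CStarCat.comp_smul_right,
      φ_smul, φ_smul, hcre, map_inv₀, Complex.conj_ofReal, sq]
    have habs : ((‖φ B y‖ : ℝ) : ℂ) ≠ 0 := by
      exact hsC
    field_simp [hsC]
  choose u hu using key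
  -- comp u (invol u) = ide A₀ as well
  have hu' : ∀ B : O, CStarCat.comp (u B) (CStarCat.invol (u B)) = CStarCat.ide A₀ := by
    intro B
    have hidem : φ A₀ (CStarCat.comp (u B) (CStarCat.invol (u B)))
        * φ A₀ (CStarCat.comp (u B) (CStarCat.invol (u B)))
        = φ A₀ (CStarCat.comp (u B) (CStarCat.invol (u B))) := by
      rw [← φ_comp]
      congr 1
      simp only [CStarCat.comp_assoc]
      rw [← CStarCat.comp_assoc (CStarCat.invol (u B)), hu, CStarCat.ide_comp]
    have hpne : CStarCat.comp (u B) (CStarCat.invol (u B)) ≠ 0 := by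
      intro h0
      apply hne B
      have h2 : CStarCat.comp (CStarCat.invol (u B))
          (CStarCat.comp (CStarCat.comp (u B) (CStarCat.invol (u B))) (u B))
          = CStarCat.ide B := by
        rw [CStarCat.comp_assoc, ← CStarCat.comp_assoc (CStarCat.invol (u B)), hu,
          CStarCat.ide_comp]
      rw [h0, czl, czr] at h2
      exact h2.symm
    have hφp : φ A₀ (CStarCat.comp (u B) (CStarCat.invol (u B))) ≠ 0 := by
      intro h0
      exact hpne (by rw [← φ_spec A₀ (CStarCat.comp (u B) (CStarCat.invol (u B))), h0, zero_smul])
    exact φ_one A₀ _ (mul_left_cancel₀ hφp (by rw [hidem, mul_one]))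
  -- build the character
  refine ⟨⟨fun {A B} x => φ A₀ (CStarCat.comp (CStarCat.comp (u A) x) (CStarCat.invol (u B))),
    ?_, ?_, ?_, ?_, ?_⟩⟩
  · intro A B x y
    rw [CStarCat.comp_add_right, CStarCat.comp_add_left, φ_add]
  · intro A B c x
    rw [CStarCat.comp_smul_right (C := B), CStarCat.comp_smul_left, φ_smul]
  · intro A B C x y
    rw [← φ_comp]
    congr 1
    simp only [CStarCat.comp_assoc]
    rw [← CStarCat.comp_assoc (CStarCat.invol (u B)), hu, CStarCat.ide_comp]
  · intro A
    rw [CStarCat.comp_ide, hu', φ_ide]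
  · intro A B x
    rw [← φ_invol]
    congr 1
    rw [CStarCat.invol_comp, CStarCat.invol_comp, CStarCat.invol_invol]
    simp only [CStarCat.comp_assoc]
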